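/- Let ρ_x, x ∈ X (finite), be mutually commuting density matrices, P a probability distribution on X, α ∈ [1/2, 1), r = (1−α)/α, and M ≥ 2. With the decoder Π_m = ρ_{x_m}^α (∑_{m'} ρ_{x_{m'}}^α)⁻¹ and codewords x₁,...,x_M drawn i.i.d. from P, the expected average decoding error satisfies 𝔼[p_err] ≤ (M−1)^r · tr[(𝔼_x ρ_x^α)^{1+r}], where p_err = (1/M) ∑_m tr[ρ_{x_m}(1 − Π_m)]. -/

import Mathlib

open MeasureTheory Matrix Set ComplexOrder

variable {m : Type*} [Fintype m] [DecidableEq m]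

/-- The integral matrix quotient `A/B := ∫₀^∞ (λ+B)⁻¹ A (λ+B)⁻¹ dλ`, defined entrywise. -/
noncomputable def mq (A B : Matrix m m ℂ) : Matrix m m ℂ :=
  Matrix.of fun i j =>
    ∫ l in Set.Ioi (0:ℝ),
      ((l • (1 : Matrix m m ℂ) + B)⁻¹ * A * (l • (1 : Matrix m m ℂ) + B)⁻¹) i j

/-- Real power of a Hermitian matrix via the spectral decomposition (junk value `0` otherwise). -/
noncomputable def mrpow (A : Matrix m m ℂ) (r : ℝ) : Matrix m m ℂ :=
  if h : A.IsHermitian then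
    (h.eigenvectorUnitary : Matrix m m ℂ) *
      Matrix.diagonal (fun i => ((h.eigenvalues i ^ r : ℝ) : ℂ)) *
      star (h.eigenvectorUnitary : Matrix m m ℂ)
  else 0

/-- Trace norm of a Hermitian matrix: the sum of the absolute values of its eigenvalues
(junk value `0` otherwise). -/
noncomputable def traceNorm (A : Matrix m m ℂ) : ℝ :=
  if h : A.IsHermitian then ∑ i, |h.eigenvalues i| else 0

/-- Operator norm of a positive semidefinite (in particular Hermitian) matrix:
its largest eigenvalue (junk value `0` otherwise). -/
noncomputable def opNorm (A : Matrix m m ℂ) : ℝ :=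
  if h : A.IsHermitian then ⨆ i, h.eigenvalues i else 0

/-- `Q₂^ι(A‖B) = tr[A (A/B)] = ∫₀^∞ tr[A (t+B)⁻¹ A (t+B)⁻¹] dt`. -/
noncomputable def Q2iota (A B : Matrix m m ℂ) : ℝ :=
  ∫ t in Set.Ioi (0:ℝ),
    (A * (t • (1 : Matrix m m ℂ) + B)⁻¹ * A * (t • (1 : Matrix m m ℂ) + B)⁻¹).trace.re

/-- A projective measurement: a finite family of mutually orthogonal projections
summing to the identity. -/
structure PVM (m : Type*) [Fintype m] [DecidableEq m] where
  k : ℕ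
  P : Fin k → Matrix m m ℂ
  herm : ∀ j, (P j).IsHermitian
  idem : ∀ j, P j * P j = P j
  orth : ∀ j j', j ≠ j' → P j * P j' = 0
  sum_eq : ∑ j, P j = 1

/-- The value `∑_j (tr[ρΛ_j])^α (tr[σΛ_j])^{1-α}` of a projective measurement. -/
noncomputable def measVal (α : ℝ) (ρ σ : Matrix m m ℂ) (Λ : PVM m) : ℝ :=
  ∑ j, ((ρ * Λ.P j).trace.re) ^ α * ((σ * Λ.P j).trace.re) ^ (1 - α)

/-- The measured Rényi quantity `Q̌_α(ρ‖σ)`: for `α ∈ [1/2,1)` it is the infimum over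
projective measurements of `∑_j (tr[ρΛ_j])^α (tr[σΛ_j])^{1-α}`. -/
noncomputable def Qmeas (α : ℝ) (ρ σ : Matrix m m ℂ) : ℝ :=
  sInf {v | ∃ Λ : PVM m, v = measVal α ρ σ Λ}

/-- The measured Rényi divergence `Ď_α(ρ‖σ) = (α-1)⁻¹ log Q̌_α(ρ‖σ)`. -/
noncomputable def Dmeas (α : ℝ) (ρ σ : Matrix m m ℂ) : ℝ :=
  (1 / (α - 1)) * Real.log (Qmeas α ρ σ)

/-- The classical-quantum state `∑_x P(x) |x⟩⟨x| ⊗ ρ_x` as a matrix on `X × m`. -/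
noncomputable def cqState {X : Type*} [Fintype X] [DecidableEq X]
    (P : X → ℝ) (ρ : X → Matrix m m ℂ) : Matrix (X × m) (X × m) ℂ :=
  Matrix.of fun p q => if p.1 = q.1 then (P p.1 : ℂ) * ρ p.1 p.2 q.2 else 0
section diag
open Module.End LinearMap Module


/-- Simultaneous diagonalization of a commuting family of Hermitian matrices. -/
lemma exists_unitary_diag {X : Type*} (ρ : X → Matrix m m ℂ)
    (hherm : ∀ x, (ρ x).IsHermitian)
    (hcomm : ∀ x y, ρ x * ρ y = ρ y * ρ x) :
    ∃ (U : Matrix.unitaryGroup m ℂ) (d : X → m → ℝ),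
      ∀ x, ρ x = (U : Matrix m m ℂ) * Matrix.diagonal (fun i => (d x i : ℂ)) *
        star (U : Matrix m m ℂ) := by
  classical
  have _dummy : True := trivial
  set T : X → Module.End ℂ (EuclideanSpace ℂ m) := fun x => Matrix.toEuclideanLin (ρ x) with hT
  have hTsymm : ∀ x, (T x).IsSymmetric := fun x =>
    Matrix.isHermitian_iff_isSymmetric.1 (hherm x)
  have hTcomm : Pairwise (Function.onFun Commute T) := by
    intro x y _
    show T x * T y = T y * T x
    have h1 : ∀ A B : Matrix m m ℂ, Matrix.toEuclideanLin (A * B)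
        = Matrix.toEuclideanLin A * Matrix.toEuclideanLin B := by
      intro A B
      simp only [Matrix.toEuclideanLin_eq_toLin]
      exact Matrix.toLin_mul _ _ _ A B
    rw [hT]; simp only []
    rw [← h1, ← h1, hcomm]
  set V : (X → ℂ) → Submodule ℂ (EuclideanSpace ℂ m) := fun χ => ⨅ x, eigenspace (T x) (χ x) with hV
  have hInt : DirectSum.IsInternal V :=
    LinearMap.IsSymmetric.LinearMap.IsSymmetric.directSum_isInternal_of_pairwise_commute
      hTsymm hTcomm
  have hOrth := LinearMap.IsSymmetric.orthogonalFamily_iInf_eigenspaces hTsymm (T := T)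
  haveI : Fintype {χ // V χ ≠ ⊥} :=
    hInt.submodule_iSupIndep.fintypeNeBotOfFiniteDimensional
  have hInt' : DirectSum.IsInternal (fun χ : {χ // V χ ≠ ⊥} => V χ) :=
    DirectSum.isInternal_ne_bot_iff.mpr hInt
  have hOrth' := hOrth.comp (Subtype.val_injective (p := fun χ => V χ ≠ ⊥))
  have hn : finrank ℂ (EuclideanSpace ℂ m) = Fintype.card m := finrank_euclideanSpace
  set b0 : OrthonormalBasis (Fin (Fintype.card m)) ℂ (EuclideanSpace ℂ m) :=
    hInt'.subordinateOrthonormalBasis hn hOrth' with hb0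
  set e : Fin (Fintype.card m) ≃ m := Fintype.equivOfCardEq (Fintype.card_fin _) with he
  set b : OrthonormalBasis m ℂ (EuclideanSpace ℂ m) := b0.reindex e with hb
  -- eigenvalue functions
  have key : ∀ j : m, ∃ χ : X → ℂ, ∀ x, T x (b j) = χ x • b j := by
    intro j
    refine ⟨(hInt'.subordinateOrthonormalBasisIndex hn (e.symm j) hOrth' : {χ // V χ ≠ ⊥}).1,
      fun x => ?_⟩
    have hmem := hInt'.subordinateOrthonormalBasis_subordinate hn (e.symm j) hOrth'
    have : b j = b0 (e.symm j) := by rw [hb]; simp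
    rw [this]
    have hmem' : b0 (e.symm j) ∈ V (hInt'.subordinateOrthonormalBasisIndex hn (e.symm j) hOrth').1 :=
      hmem
    have := (Submodule.mem_iInf _).mp hmem' x
    rw [mem_eigenspace_iff] at this
    exact this
  choose χ hχ using key
  -- the eigenvalues are real
  have hreal : ∀ j x, ∃ r : ℝ, χ j x = (r : ℂ) := by
    intro j x
    have hb0 : b j ≠ 0 := (b.toBasis.ne_zero j)
    have hev : HasEigenvalue (T x) (χ j x) :=
      hasEigenvalue_of_hasEigenvector ⟨mem_eigenspace_iff.mpr (hχ j x), by simpa using hb0⟩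
    have := (hTsymm x).conj_eigenvalue_eq_self hev
    exact ⟨(χ j x).re, (Complex.conj_eq_iff_re.mp this).symm⟩
  choose d hd using hreal
  set U : Matrix m m ℂ := (EuclideanSpace.basisFun m ℂ).toBasis.toMatrix b.toBasis with hU
  have hUmem : U ∈ Matrix.unitaryGroup m ℂ :=
    (EuclideanSpace.basisFun m ℂ).toMatrix_orthonormalBasis_mem_unitary b
  have hUstarmul : star U * U = 1 := (Unitary.mem_iff.mp hUmem).1
  have hUmulstar : U * star U = 1 := (Unitary.mem_iff.mp hUmem).2
  have hUapply : ∀ i j, U i j = b j i := fun i j => rfl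
  have hUmul : ∀ j, U *ᵥ Pi.single j 1 = ⇑(b j) := by
    intro j
    funext i
    simp [Matrix.mulVec_single, hUapply]
  have hUstarvec : ∀ j, star U *ᵥ ⇑(b j) = Pi.single j 1 := by
    intro j
    rw [← hUmul, Matrix.mulVec_mulVec, hUstarmul, Matrix.one_mulVec]
  have hmv : ∀ x j, ρ x *ᵥ ⇑(b j) = (d j x : ℂ) • ⇑(b j) := by
    intro x j
    have h1 := hχ j x
    rw [hd j x] at h1
    exact congr(WithLp.ofLp $(h1))
  refine ⟨⟨U, hUmem⟩, fun x j => d j x, fun x => ?_⟩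
  have hdiag : star U * ρ x * U = Matrix.diagonal (fun j => (d j x : ℂ)) := by
    apply Matrix.toEuclideanLin.injective
    apply Basis.ext (EuclideanSpace.basisFun m ℂ).toBasis
    intro i
    simp only [Matrix.toEuclideanLin_apply, OrthonormalBasis.coe_toBasis,
      EuclideanSpace.basisFun_apply, PiLp.ofLp_single, ← Matrix.mulVec_mulVec,
      hUmul, hmv, Matrix.diagonal_mulVec_single, Matrix.mulVec_smul, hUstarvec,
      Function.comp_apply, mul_one]
    apply PiLp.ext
    intro j
    simp only [PiLp.smul_apply, EuclideanSpace.single_apply, Pi.smul_apply, Pi.single_apply, smul_eq_mul, mul_ite, mul_one,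
      mul_zero]
  calc ρ x = (U * star U) * ρ x * (U * star U) := by rw [hUmulstar]; simp
  _ = U * (star U * ρ x * U) * star U := by noncomm_ring
  _ = _ := by rw [hdiag]

end diag

noncomputable def cdiag (U : Matrix m m ℂ) (f : m → ℝ) : Matrix m m ℂ :=
  U * Matrix.diagonal (fun i => (f i : ℂ)) * star U

section conj

/-- Conjugation by a unitary as an algebra homomorphism. -/
noncomputable def conjAlgHom (U : Matrix m m ℂ) (h1 : star U * U = 1) (h2 : U * star U = 1) :
    Matrix m m ℂ →ₐ[ℂ] Matrix m m ℂ where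
  toFun A := U * A * star U
  map_one' := by show U * 1 * star U = 1; rw [mul_one, h2]
  map_mul' A B := by
    show U * (A * B) * star U = (U * A * star U) * (U * B * star U)
    have h : (U * A * star U) * (U * B * star U) = (U * A) * (star U * U) * (B * star U) := by
      noncomm_ring
    rw [h, h1, mul_one]; noncomm_ring
  map_zero' := by simp
  map_add' A B := by noncomm_ring
  commutes' c := by
    simp only [Algebra.algebraMap_eq_smul_one]
    rw [Matrix.mul_smul, mul_one, Matrix.smul_mul, h2]

lemma aeval_conj {U : Matrix m m ℂ} (h1 : star U * U = 1) (h2 : U * star U = 1)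
    (A : Matrix m m ℂ) (p : Polynomial ℂ) :
    Polynomial.aeval (U * A * star U) p = U * Polynomial.aeval A p * star U :=
  Polynomial.aeval_algHom_apply (conjAlgHom U h1 h2) A p

lemma aeval_diagonal (g : m → ℂ) (p : Polynomial ℂ) :
    Polynomial.aeval (Matrix.diagonal g) p =
      Matrix.diagonal (fun i => Polynomial.aeval (g i) p) := by
  have h := Polynomial.aeval_algHom_apply (Matrix.diagonalAlgHom (n := m) ℂ) g p
  simp only [Matrix.diagonalAlgHom_apply] at h
  rw [h]
  exact congrArg Matrix.diagonal
    (funext fun i => (Polynomial.aeval_algHom_apply (Pi.evalAlgHom ℂ (fun _ => ℂ) i) g p).symm)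

lemma aeval_ofReal (t : ℝ) (p : Polynomial ℝ) :
    Polynomial.aeval ((t : ℂ)) (p.map (algebraMap ℝ ℂ)) = ((p.eval t : ℝ) : ℂ) := by
  rw [Polynomial.aeval_map_algebraMap]
  have : ((t : ℂ)) = algebraMap ℝ ℂ t := rfl
  rw [this, Polynomial.aeval_algebraMap_apply_eq_algebraMap_eval]
  simp

lemma mrpow_eq_aeval {A : Matrix m m ℂ} (hA : A.IsHermitian) (r : ℝ) (p : Polynomial ℝ)
    (hp : ∀ t ∈ spectrum ℝ A, p.eval t = t ^ r) :
    mrpow A r = Polynomial.aeval A (p.map (algebraMap ℝ ℂ)) := by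
  have h1 : star (hA.eigenvectorUnitary : Matrix m m ℂ) * (hA.eigenvectorUnitary : Matrix m m ℂ)
      = 1 := (Unitary.mem_iff.mp hA.eigenvectorUnitary.2).1
  have h2 : (hA.eigenvectorUnitary : Matrix m m ℂ) * star (hA.eigenvectorUnitary : Matrix m m ℂ)
      = 1 := (Unitary.mem_iff.mp hA.eigenvectorUnitary.2).2
  conv_rhs => rw [hA.spectral_theorem]
  simp only [Unitary.conjStarAlgAut_apply, Unitary.coe_star]
  rw [aeval_conj h1 h2, aeval_diagonal]
  rw [mrpow, dif_pos hA]
  have hd : (fun i => Polynomial.aeval ((RCLike.ofReal ∘ hA.eigenvalues) i)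
      (p.map (algebraMap ℝ ℂ))) = fun i => ((hA.eigenvalues i ^ r : ℝ) : ℂ) := by
    funext i
    have hco : ((RCLike.ofReal ∘ hA.eigenvalues) i : ℂ) = ((hA.eigenvalues i : ℝ) : ℂ) := rfl
    rw [hco, aeval_ofReal, hp _ (hA.eigenvalues_mem_spectrum_real i)]
  rw [hd]

end conj

section cdiag

variable {U : Matrix m m ℂ}

lemma cdiag_isHermitian (h1 : star U * U = 1) (f : m → ℝ) : (cdiag U f).IsHermitian := by
  show (cdiag U f)ᴴ = cdiag U f
  unfold cdiag
  rw [Matrix.conjTranspose_mul, Matrix.conjTranspose_mul, Matrix.diagonal_conjTranspose]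
  have : star (fun i => ((f i : ℂ))) = fun i => ((f i : ℂ)) := by
    funext i; simp
  rw [this]
  rw [← Matrix.star_eq_conjTranspose U, ← Matrix.star_eq_conjTranspose (star U), star_star,
    Matrix.mul_assoc]

lemma cdiag_mul (h1 : star U * U = 1) (f g : m → ℝ) :
    cdiag U f * cdiag U g = cdiag U (fun i => f i * g i) := by
  unfold cdiag
  have : U * Matrix.diagonal (fun i => (f i : ℂ)) * star U *
      (U * Matrix.diagonal (fun i => (g i : ℂ)) * star U) =
      U * (Matrix.diagonal (fun i => (f i : ℂ)) * (star U * U) *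
        Matrix.diagonal (fun i => (g i : ℂ))) * star U := by noncomm_ring
  rw [this, h1, mul_one, Matrix.diagonal_mul_diagonal]
  congr 2
  funext i
  push_cast
  ring

lemma cdiag_one (h2 : U * star U = 1) : cdiag U (fun _ => (1:ℝ)) = 1 := by
  unfold cdiag
  simp only [Complex.ofReal_one]
  rw [Matrix.diagonal_one, mul_one, h2]

lemma cdiag_zero : cdiag U (fun _ => (0:ℝ)) = 0 := by
  unfold cdiag
  simp

lemma cdiag_add (f g : m → ℝ) : cdiag U (fun i => f i + g i) = cdiag U f + cdiag U g := by
  unfold cdiag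
  have : Matrix.diagonal (fun i => ((f i + g i : ℝ) : ℂ)) =
      Matrix.diagonal (fun i => (f i : ℂ)) + Matrix.diagonal (fun i => (g i : ℂ)) := by
    rw [Matrix.diagonal_add]; congr 1; funext i; push_cast; ring
  rw [this]
  noncomm_ring

lemma cdiag_smul (r : ℝ) (f : m → ℝ) : cdiag U (fun i => r * f i) = r • cdiag U f := by
  unfold cdiag
  have : Matrix.diagonal (fun i => ((r * f i : ℝ) : ℂ)) =
      r • Matrix.diagonal (fun i => ((f i : ℝ) : ℂ)) := by
    have hfun : (fun i => ((r * f i : ℝ) : ℂ)) = r • (fun i => ((f i : ℝ) : ℂ)) := by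
      funext i; simp [Complex.real_smul]
    rw [hfun, Matrix.diagonal_smul]
  rw [this, Matrix.mul_smul, Matrix.smul_mul]

lemma cdiag_sub (f g : m → ℝ) : cdiag U (fun i => f i - g i) = cdiag U f - cdiag U g := by
  have h : (fun i => f i - g i) = fun i => f i + (-1 : ℝ) * g i := by funext i; ring
  rw [h, cdiag_add, cdiag_smul]
  simp [sub_eq_add_neg]

lemma cdiag_sum {ι : Type*} (s : Finset ι) (F : ι → m → ℝ) :
    cdiag U (fun i => ∑ k ∈ s, F k i) = ∑ k ∈ s, cdiag U (F k) := by
  classical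
  induction s using Finset.induction_on with
  | empty => simpa using cdiag_zero
  | insert a s hx ih =>
    rw [Finset.sum_insert hx]
    have : (fun i => ∑ k ∈ insert a s, F k i) = fun i => F a i + ∑ k ∈ s, F k i := by
      funext i; rw [Finset.sum_insert hx]
    rw [this, cdiag_add, ih]

lemma cdiag_trace_re (h1 : star U * U = 1) (f : m → ℝ) :
    (cdiag U f).trace.re = ∑ i, f i := by
  unfold cdiag
  rw [Matrix.trace_mul_cycle, h1, one_mul, Matrix.trace_diagonal]
  rw [Complex.re_sum]
  simp

lemma cdiag_inv (h1 : star U * U = 1) (h2 : U * star U = 1) (f : m → ℝ)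
    (hf : ∀ i, f i ≠ 0) : (cdiag U f)⁻¹ = cdiag U (fun i => (f i)⁻¹) := by
  apply Matrix.inv_eq_right_inv
  rw [cdiag_mul h1]
  have : (fun i => f i * (f i)⁻¹) = fun _ => (1:ℝ) := by
    funext i; exact mul_inv_cancel₀ (hf i)
  rw [this, cdiag_one h2]

lemma cdiag_spectrum (h1 : star U * U = 1) (h2 : U * star U = 1) (f : m → ℝ) :
    spectrum ℝ (cdiag U f) ⊆ Set.range f := by
  intro t ht
  have htC : (t : ℂ) ∈ spectrum ℂ (cdiag U f) := spectrum.algebraMap_mem ℂ ht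
  set u : (Matrix m m ℂ)ˣ := ⟨U, star U, h2, h1⟩ with hu
  have hc : cdiag U f = (u : Matrix m m ℂ) * Matrix.diagonal (fun i => (f i : ℂ)) *
      ((u⁻¹ : (Matrix m m ℂ)ˣ) : Matrix m m ℂ) := rfl
  rw [hc, spectrum.units_conjugate, spectrum_diagonal] at htC
  obtain ⟨i, hi⟩ := htC
  exact ⟨i, Complex.ofReal_inj.mp hi⟩

lemma cdiag_spectrum_eq (h1 : star U * U = 1) (h2 : U * star U = 1) (f : m → ℝ) :
    spectrum ℝ (cdiag U f) = Set.range f := by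
  ext t
  set u : (Matrix m m ℂ)ˣ := ⟨U, star U, h2, h1⟩ with hu
  have hc : cdiag U f = (u : Matrix m m ℂ) * Matrix.diagonal (fun i => (f i : ℂ)) *
      ((u⁻¹ : (Matrix m m ℂ)ˣ) : Matrix m m ℂ) := rfl
  rw [hc, spectrum.units_conjugate, ← spectrum.algebraMap_mem_iff ℂ, spectrum_diagonal]
  constructor
  · rintro ⟨i, hi⟩
    refine ⟨i, ?_⟩
    have h3 : ((f i : ℝ) : ℂ) = ((t : ℝ) : ℂ) := hi
    exact_mod_cast h3
  · rintro ⟨i, hi⟩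
    refine ⟨i, ?_⟩
    show ((f i : ℝ) : ℂ) = algebraMap ℝ ℂ t
    rw [hi]
    rfl

lemma cdiag_mrpow (h1 : star U * U = 1) (h2 : U * star U = 1) (f : m → ℝ) (r : ℝ) :
    mrpow (cdiag U f) r = cdiag U (fun i => f i ^ r) := by
  classical
  set s : Finset ℝ := Finset.image f Finset.univ with hs
  set p : Polynomial ℝ := Lagrange.interpolate s id (fun t => t ^ r) with hp
  have hnode : ∀ t ∈ s, p.eval t = t ^ r := by
    intro t ht
    have := Lagrange.eval_interpolate_at_node (v := id) (r := fun t => t ^ r)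
      (Set.injOn_id _) ht
    simpa [hp] using this
  have hspec : ∀ t ∈ spectrum ℝ (cdiag U f), p.eval t = t ^ r := by
    intro t ht
    obtain ⟨i, rfl⟩ := cdiag_spectrum h1 h2 f ht
    exact hnode _ (Finset.mem_image_of_mem f (Finset.mem_univ i))
  rw [mrpow_eq_aeval (cdiag_isHermitian h1 f) r p hspec]
  unfold cdiag
  rw [aeval_conj h1 h2, aeval_diagonal]
  have hd : (fun i => Polynomial.aeval ((f i : ℂ)) (p.map (algebraMap ℝ ℂ))) =
      fun i => ((f i ^ r : ℝ) : ℂ) := by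
    funext i
    rw [aeval_ofReal, hnode _ (Finset.mem_image_of_mem f (Finset.mem_univ i))]
  rw [hd]

end cdiag

section scalar2
open Finset

variable {X : Type*} [Fintype X] {ι : Type*} [Fintype ι] [DecidableEq ι]

lemma sum_prod_eq (g : ι → X → ℝ) :
    ∑ c : ι → X, ∏ i, g i (c i) = ∏ i, ∑ x, g i x := by
  classical
  rw [Finset.prod_univ_sum]
  rw [Fintype.piFinset_univ]

lemma sum_prod_weights (P : X → ℝ) (hP1 : ∑ x, P x = 1) :
    ∑ c : ι → X, ∏ i, P (c i) = 1 := by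
  rw [sum_prod_eq (fun _ x => P x)]
  simp [hP1]

lemma sum_prod_mul_single (P : X → ℝ) (hP1 : ∑ x, P x = 1) (k : ι) (h : X → ℝ) :
    ∑ c : ι → X, (∏ i, P (c i)) * h (c k) = ∑ x, P x * h x := by
  classical
  have hpt : ∀ c : ι → X, (∏ i, P (c i)) * h (c k) =
      ∏ i, (if i = k then P (c i) * h (c i) else P (c i)) := by
    intro c
    rw [← Finset.mul_prod_erase univ (fun i => if i = k then P (c i) * h (c i) else P (c i))
      (Finset.mem_univ k), if_pos rfl,
      ← Finset.mul_prod_erase univ (fun i => P (c i)) (Finset.mem_univ k)]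
    have : ∏ i ∈ univ.erase k, (if i = k then P (c i) * h (c i) else P (c i)) =
        ∏ i ∈ univ.erase k, P (c i) :=
      Finset.prod_congr rfl (fun i hi => if_neg (Finset.ne_of_mem_erase hi))
    rw [this]; ring
  rw [Finset.sum_congr rfl (fun c _ => hpt c),
    sum_prod_eq (fun i x => if i = k then P x * h x else P x)]
  rw [← Finset.mul_prod_erase univ (fun i => ∑ x, if i = k then P x * h x else P x)
    (Finset.mem_univ k)]
  have h1 : (∑ x, if k = k then P x * h x else P x) = ∑ x, P x * h x := by simp
  have h2 : ∏ i ∈ univ.erase k, (∑ x, if i = k then P x * h x else P x) = 1 := by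
    apply Finset.prod_eq_one
    intro i hi
    simp only [if_neg (Finset.ne_of_mem_erase hi)]
    exact hP1
  rw [h1, h2, mul_one]

lemma sum_split (k : ι) (h : (ι → X) → ℝ) :
    ∑ c : ι → X, h c =
      ∑ x : X, ∑ c' : {j : ι // j ≠ k} → X,
        h ((Equiv.piSplitAt k (fun _ => X)).symm (x, c')) := by
  rw [← Equiv.sum_comp (Equiv.piSplitAt k (fun _ : ι => X)).symm h, Fintype.sum_prod_type]

lemma piSplitAt_symm_at (k : ι) (x : X) (c' : {j : ι // j ≠ k} → X) :
    (Equiv.piSplitAt k (fun _ => X)).symm (x, c') k = x := by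
  simp [Equiv.piSplitAt]

lemma piSplitAt_symm_ne (k : ι) (x : X) (c' : {j : ι // j ≠ k} → X) (j : {j : ι // j ≠ k}) :
    (Equiv.piSplitAt k (fun _ => X)).symm (x, c') j.1 = c' j := by
  obtain ⟨j, hj⟩ := j
  simp [Equiv.piSplitAt, hj]

lemma prod_subtype_ne (k : ι) (f : ι → ℝ) :
    ∏ j : ι, f j = f k * ∏ j : {j : ι // j ≠ k}, f j.1 := by
  classical
  rw [← Finset.mul_prod_erase univ f (Finset.mem_univ k)]
  congr 1
  rw [← Finset.prod_subtype (univ.erase k) (fun j => by simp) (fun j => f j)]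

lemma sum_subtype_ne (k : ι) (f : ι → ℝ) :
    ∑ j : ι, f j = f k + ∑ j : {j : ι // j ≠ k}, f j.1 := by
  classical
  rw [← Finset.add_sum_erase univ f (Finset.mem_univ k)]
  congr 1
  rw [← Finset.sum_subtype (univ.erase k) (fun j => by simp) (fun j => f j)]

lemma jensen_rpow (r : ℝ) (hr0 : 0 ≤ r) (hr1 : r ≤ 1) {κ : Type*} [Fintype κ]
    (w z : κ → ℝ) (hw : ∀ i, 0 ≤ w i) (hw1 : ∑ i, w i = 1) (hz : ∀ i, 0 ≤ z i) :
    ∑ i, w i * z i ^ r ≤ (∑ i, w i * z i) ^ r := by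
  have := (Real.concaveOn_rpow hr0 hr1).le_map_sum (t := univ) (fun i _ => hw i) hw1
    (fun i _ => (hz i : z i ∈ Set.Ici 0))
  simpa [smul_eq_mul] using this

lemma pointwise_bound {α r p b : ℝ} (hα : 1/2 ≤ α) (hα1 : α < 1) (hr : r = (1-α)/α)
    (hp : 0 < p) (hb : 0 ≤ b) :
    p * (1 - p ^ α * (p ^ α + b)⁻¹) ≤ p ^ α * b ^ r := by
  have hα0 : 0 < α := by linarith
  have hr0 : 0 ≤ r := by rw [hr]; exact div_nonneg (by linarith) hα0.le
  have hr1 : r ≤ 1 := by rw [hr, div_le_one hα0]; linarith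
  have ha : 0 < p ^ α := Real.rpow_pos_of_pos hp α
  have hab : 0 < p ^ α + b := by linarith
  have h1 : 1 - p ^ α * (p ^ α + b)⁻¹ = b / (p ^ α + b) := by
    field_simp; ring
  rw [h1]
  rcases eq_or_lt_of_le hb with hb0 | hb0
  · rw [← hb0]
    simp only [zero_div, mul_zero]
    positivity
  have key : b / (p ^ α + b) ≤ (b / p ^ α) ^ r := by
    rcases le_or_gt (b / p ^ α) 1 with h | h
    · calc b / (p ^ α + b) ≤ b / p ^ α := by gcongr; linarith
        _ = (b / p ^ α) ^ (1:ℝ) := (Real.rpow_one _).symm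
        _ ≤ (b / p ^ α) ^ r := by
            apply Real.rpow_le_rpow_of_exponent_ge (by positivity) h hr1
    · calc b / (p ^ α + b) ≤ 1 := by
            rw [div_le_one hab]; linarith
        _ ≤ (b / p ^ α) ^ r := Real.one_le_rpow h.le hr0
  calc p * (b / (p ^ α + b)) ≤ p * ((b / p ^ α) ^ r) := by
        exact mul_le_mul_of_nonneg_left key hp.le
    _ = p ^ α * b ^ r := by
        rw [Real.div_rpow hb ha.le, ← Real.rpow_mul hp.le α r]
        have hαr : α * r = 1 - α := by rw [hr]; field_simp
        rw [hαr]
        have hps : p ^ α = p / p ^ (1 - α) := by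
          have h2 := Real.rpow_sub hp 1 (1 - α)
          rw [show (1:ℝ) - (1 - α) = α by ring, Real.rpow_one] at h2
          exact h2
        rw [hps]
        ring



lemma scalar_main {m : Type*} [Fintype m] (M : ℕ) (hM : 2 ≤ M)
    (P : X → ℝ) (hP : ∀ x, 0 ≤ P x) (hP1 : ∑ x, P x = 1)
    (d : X → m → ℝ) (hd : ∀ x i, 0 < d x i)
    (α : ℝ) (hα : 1/2 ≤ α) (hα1 : α < 1) :
    ∑ c : Fin M → X, (∏ k, P (c k)) * ((1 / (M:ℝ)) * ∑ k, ∑ i, d (c k) i *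
        (1 - d (c k) i ^ α * (∑ k', d (c k') i ^ α)⁻¹))
      ≤ ((M:ℝ) - 1) ^ ((1-α)/α) * ∑ i, (∑ x, P x * d x i ^ α) ^ (1 + (1-α)/α) := by
  classical
  set r := (1-α)/α with hrdef
  have hα0 : 0 < α := by linarith
  have hr0 : 0 ≤ r := div_nonneg (by linarith) hα0.le
  have hr1 : r ≤ 1 := by rw [hrdef, div_le_one hα0]; linarith
  set q : m → ℝ := fun i => ∑ x, P x * d x i ^ α with hq
  have hq0 : ∀ i, 0 ≤ q i := fun i => Finset.sum_nonneg fun x _ =>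
    mul_nonneg (hP x) (Real.rpow_nonneg (hd x i).le α)
  have h2M : (2:ℝ) ≤ M := by exact_mod_cast hM
  have hM0 : (0:ℝ) < M := by linarith
  have hM1 : (0:ℝ) ≤ (M:ℝ) - 1 := by linarith
  set W : (Fin M → X) → ℝ := fun c => ∏ k, P (c k) with hW
  have hWnn : ∀ c, 0 ≤ W c := fun c => Finset.prod_nonneg fun k _ => hP (c k)
  set t : (Fin M → X) → Fin M → m → ℝ := fun c k i =>
    d (c k) i * (1 - d (c k) i ^ α * (∑ k', d (c k') i ^ α)⁻¹) with ht
  -- rearrange LHS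
  have step0 : ∑ c : Fin M → X, W c * ((1 / (M:ℝ)) * ∑ k, ∑ i, t c k i)
      = (1/(M:ℝ)) * ∑ k : Fin M, ∑ i, ∑ c : Fin M → X, W c * t c k i := by
    have hc : ∀ c : Fin M → X, W c * ∑ k, ∑ i, t c k i = ∑ k, ∑ i, W c * t c k i := by
      intro c
      rw [Finset.mul_sum]
      exact Finset.sum_congr rfl fun k _ => Finset.mul_sum _ _ _
    calc ∑ c : Fin M → X, W c * ((1 / (M:ℝ)) * ∑ k, ∑ i, t c k i)
        = ∑ c : Fin M → X, (1 / (M:ℝ)) * (W c * ∑ k, ∑ i, t c k i) := by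
          exact Finset.sum_congr rfl fun c _ => by ring
      _ = (1/(M:ℝ)) * ∑ c : Fin M → X, ∑ k, ∑ i, W c * t c k i := by
          rw [← Finset.mul_sum]
          congr 1
          exact Finset.sum_congr rfl fun c _ => hc c
      _ = (1/(M:ℝ)) * ∑ k : Fin M, ∑ c : Fin M → X, ∑ i, W c * t c k i := by
          rw [Finset.sum_comm]
      _ = (1/(M:ℝ)) * ∑ k : Fin M, ∑ i, ∑ c : Fin M → X, W c * t c k i := by
          congr 1
          exact Finset.sum_congr rfl fun k _ => Finset.sum_comm
  rw [step0]
  -- main bound per (k,i)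
  have main : ∀ (k : Fin M) (i : m),
      ∑ c : Fin M → X, W c * t c k i ≤ ((M:ℝ) - 1) ^ r * q i ^ (1 + r) := by
    intro k i
    -- step A : pointwise bound
    have stepA : ∑ c : Fin M → X, W c * t c k i ≤
        ∑ c : Fin M → X, W c * (d (c k) i ^ α * (∑ j ∈ univ.erase k, d (c j) i ^ α) ^ r) := by
      apply Finset.sum_le_sum
      intro c _
      apply mul_le_mul_of_nonneg_left _ (hWnn c)
      have hsum : ∑ k' : Fin M, d (c k') i ^ α =
          d (c k) i ^ α + ∑ j ∈ univ.erase k, d (c j) i ^ α :=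
        (Finset.add_sum_erase univ (fun j => d (c j) i ^ α) (Finset.mem_univ k)).symm
      have hb : (0:ℝ) ≤ ∑ j ∈ univ.erase k, d (c j) i ^ α :=
        Finset.sum_nonneg fun j _ => Real.rpow_nonneg (hd (c j) i).le α
      have hpb := pointwise_bound (p := d (c k) i)
        (b := ∑ j ∈ univ.erase k, d (c j) i ^ α) hα hα1 hrdef (hd (c k) i) hb
      calc t c k i = d (c k) i * (1 - d (c k) i ^ α *
            (d (c k) i ^ α + ∑ j ∈ univ.erase k, d (c j) i ^ α)⁻¹) := by
            rw [ht]
            simp only []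
            rw [hsum]
        _ ≤ _ := hpb
    -- step B : split the sum at coordinate k
    set E : X × ({j : Fin M // j ≠ k} → X) → (Fin M → X) :=
      fun p => (Equiv.piSplitAt k (fun _ => X)).symm p with hE
    set W' : ({j : Fin M // j ≠ k} → X) → ℝ := fun c' => ∏ j', P (c' j') with hW'
    set Z : ({j : Fin M // j ≠ k} → X) → ℝ := fun c' => ∑ j', d (c' j') i ^ α with hZ
    have hW'nn : ∀ c', 0 ≤ W' c' := fun c' => Finset.prod_nonneg fun j _ => hP (c' j)
    have hZnn : ∀ c', 0 ≤ Z c' :=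
      fun c' => Finset.sum_nonneg fun j _ => Real.rpow_nonneg (hd (c' j) i).le α
    have stepB : ∑ c : Fin M → X,
        W c * (d (c k) i ^ α * (∑ j ∈ univ.erase k, d (c j) i ^ α) ^ r)
        = q i * ∑ c', W' c' * Z c' ^ r := by
      rw [sum_split k (fun c => W c * (d (c k) i ^ α *
        (∑ j ∈ univ.erase k, d (c j) i ^ α) ^ r))]
      have hterm : ∀ (x : X) (c' : {j : Fin M // j ≠ k} → X),
          W (E (x, c')) * (d ((E (x, c')) k) i ^ α *
            (∑ j ∈ univ.erase k, d ((E (x, c')) j) i ^ α) ^ r)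
          = (P x * d x i ^ α) * (W' c' * Z c' ^ r) := by
        intro x c'
        have h1 : W (E (x, c')) = P x * W' c' := by
          show ∏ j, P ((E (x, c')) j) = P x * W' c'
          rw [prod_subtype_ne k (fun j => P ((E (x, c')) j))]
          rw [show (E (x, c')) k = x from piSplitAt_symm_at k x c']
          congr 1
          exact Finset.prod_congr rfl fun j' _ =>
            congrArg P (show (E (x, c')) j'.1 = c' j' from piSplitAt_symm_ne k x c' j')
        have h2 : (E (x, c')) k = x := piSplitAt_symm_at k x c'
        have h3 : ∑ j ∈ univ.erase k, d ((E (x, c')) j) i ^ α = Z c' := by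
          have h4 : ∑ j' : {j : Fin M // j ≠ k}, d ((E (x, c')) j'.1) i ^ α = Z c' :=
            Finset.sum_congr rfl fun j' _ => by
              rw [show (E (x, c')) j'.1 = c' j' from piSplitAt_symm_ne k x c' j']
          rw [← h4, ← Finset.sum_subtype (univ.erase k) (fun j => by simp)
            (fun j => d ((E (x, c')) j) i ^ α)]
        rw [h1, h2, h3]
        ring
      calc ∑ x : X, ∑ c',
            W (E (x, c')) * (d ((E (x, c')) k) i ^ α *
              (∑ j ∈ univ.erase k, d ((E (x, c')) j) i ^ α) ^ r)
          = ∑ x : X, ∑ c', (P x * d x i ^ α) * (W' c' * Z c' ^ r) :=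
            Finset.sum_congr rfl fun x _ => Finset.sum_congr rfl fun c' _ => hterm x c'
        _ = (∑ x : X, P x * d x i ^ α) * ∑ c', W' c' * Z c' ^ r := by
            rw [Finset.sum_mul_sum]
        _ = q i * ∑ c', W' c' * Z c' ^ r := rfl
    -- step C : Jensen
    have hcard : (Fintype.card {j : Fin M // j ≠ k} : ℝ) = (M:ℝ) - 1 := by
      have hc1 : Fintype.card {j : Fin M // j ≠ k} = M - 1 := by
        simp [Fintype.card_subtype_compl]
      rw [hc1]
      have h1 : (1:ℕ) ≤ M := le_trans (by norm_num) hM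
      push_cast [Nat.cast_sub h1]
      ring
    have stepC : ∑ c', W' c' * Z c' ^ r ≤ (((M:ℝ) - 1) * q i) ^ r := by
      have hj := jensen_rpow r hr0 hr1 W' Z hW'nn (sum_prod_weights P hP1) hZnn
      have hEZ : ∑ c', W' c' * Z c' = ((M:ℝ) - 1) * q i := by
        have h5 : ∀ c' : {j : Fin M // j ≠ k} → X,
            W' c' * Z c' = ∑ j', W' c' * d (c' j') i ^ α := by
          intro c'; rw [hZ]; exact Finset.mul_sum _ _ _
        calc ∑ c', W' c' * Z c'
            = ∑ c', ∑ j', W' c' * d (c' j') i ^ α :=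
              Finset.sum_congr rfl fun c' _ => h5 c'
          _ = ∑ j' : {j : Fin M // j ≠ k}, ∑ c', W' c' * d (c' j') i ^ α :=
              Finset.sum_comm
          _ = ∑ j' : {j : Fin M // j ≠ k}, ∑ x, P x * d x i ^ α :=
              Finset.sum_congr rfl fun j' _ =>
                sum_prod_mul_single P hP1 j' (fun x => d x i ^ α)
          _ = (Fintype.card {j : Fin M // j ≠ k} : ℝ) * (∑ x, P x * d x i ^ α) := by
              rw [Finset.sum_const, Finset.card_univ, nsmul_eq_mul]
          _ = ((M:ℝ) - 1) * q i := by rw [hcard]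
      exact hEZ ▸ hj
    -- combine
    calc ∑ c : Fin M → X, W c * t c k i
        ≤ ∑ c : Fin M → X, W c *
            (d (c k) i ^ α * (∑ j ∈ univ.erase k, d (c j) i ^ α) ^ r) := stepA
      _ = q i * ∑ c', W' c' * Z c' ^ r := stepB
      _ ≤ q i * (((M:ℝ) - 1) * q i) ^ r := mul_le_mul_of_nonneg_left stepC (hq0 i)
      _ = ((M:ℝ) - 1) ^ r * q i ^ (1 + r) := by
          rw [Real.mul_rpow hM1 (hq0 i),
            Real.rpow_add' (hq0 i) (ne_of_gt (by linarith : (0:ℝ) < 1 + r)),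
            Real.rpow_one]
          ring
  -- final assembly
  calc (1/(M:ℝ)) * ∑ k : Fin M, ∑ i, ∑ c : Fin M → X, W c * t c k i
      ≤ (1/(M:ℝ)) * ∑ k : Fin M, ∑ i, ((M:ℝ) - 1) ^ r * q i ^ (1 + r) := by
        apply mul_le_mul_of_nonneg_left _ (by positivity)
        exact Finset.sum_le_sum fun k _ => Finset.sum_le_sum fun i _ => main k i
    _ = ((M:ℝ) - 1) ^ r * ∑ i, q i ^ (1 + r) := by
        rw [Finset.sum_const, Finset.card_univ, Fintype.card_fin, nsmul_eq_mul,
          ← Finset.mul_sum, ← mul_assoc, one_div, inv_mul_cancel₀ (ne_of_gt hM0), one_mul]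

end scalar2

/-- Classical random-coding bound: for mutually commuting channel states and the decoder
`Π_m = ρ_{x_m}^α (∑_{m'} ρ_{x_{m'}}^α)⁻¹`, the expected average decoding error over i.i.d.
codewords satisfies `𝔼[p_err] ≤ (M-1)^r tr[(𝔼_x ρ_x^α)^{1+r}]` with `r = (1-α)/α`. -/
theorem classical_random_coding {X : Type*} [Fintype X]
    (ρ : X → Matrix m m ℂ) (hρ : ∀ x, (ρ x).PosDef) (hρt : ∀ x, (ρ x).trace = 1)
    (hcomm : ∀ x y, ρ x * ρ y = ρ y * ρ x)
    (P : X → ℝ) (hP : ∀ x, 0 ≤ P x) (hP1 : ∑ x, P x = 1)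
    (α : ℝ) (hα : α ∈ Set.Ico (1/2 : ℝ) 1) (M : ℕ) (hM : 2 ≤ M) :
    ∑ c : Fin M → X, (∏ k, P (c k)) *
        ((1 / (M : ℝ)) * ∑ k, ((ρ (c k)) *
          ((1 : Matrix m m ℂ) -
            mrpow (ρ (c k)) α * (∑ k', mrpow (ρ (c k')) α)⁻¹)).trace.re)
      ≤ ((M : ℝ) - 1) ^ ((1 - α) / α) *
          (mrpow (∑ x, P x • mrpow (ρ x) α) (1 + (1 - α) / α)).trace.re := by
  classical
  obtain ⟨U, dd, hdd⟩ := exists_unitary_diag ρ (fun x => (hρ x).1) hcomm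
  set U0 : Matrix m m ℂ := (U : Matrix m m ℂ) with hU0
  have h1 : star U0 * U0 = 1 := (Unitary.mem_iff.mp U.2).1
  have h2 : U0 * star U0 = 1 := (Unitary.mem_iff.mp U.2).2
  have hddc : ∀ x, ρ x = cdiag U0 (dd x) := fun x => hdd x
  -- positivity of the joint eigenvalues
  have hdpos : ∀ x i, 0 < dd x i := by
    intro x i
    have hmem : dd x i ∈ spectrum ℝ (ρ x) := by
      rw [hddc x, cdiag_spectrum_eq h1 h2]
      exact ⟨i, rfl⟩
    rw [Matrix.IsHermitian.spectrum_real_eq_range_eigenvalues (hρ x).1] at hmem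
    obtain ⟨j, hj⟩ := hmem
    rw [← hj]
    exact (hρ x).eigenvalues_pos j
  have hα1 : (1:ℝ)/2 ≤ α := hα.1
  have hα2 : α < 1 := hα.2
  have e1 : ∀ y, mrpow (ρ y) α = cdiag U0 (fun i => dd y i ^ α) := fun y => by
    rw [hddc y, cdiag_mrpow h1 h2]
  -- trace identity for the error terms
  have hTr : ∀ (c : Fin M → X) (k : Fin M),
      ((ρ (c k)) * ((1 : Matrix m m ℂ) -
        mrpow (ρ (c k)) α * (∑ k', mrpow (ρ (c k')) α)⁻¹)).trace.re
      = ∑ i, dd (c k) i * (1 - dd (c k) i ^ α * (∑ k', dd (c k') i ^ α)⁻¹) := by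
    intro c k
    have e2 : (∑ k', mrpow (ρ (c k')) α)
        = cdiag U0 (fun i => ∑ k', dd (c k') i ^ α) := by
      rw [Finset.sum_congr rfl (fun k' _ => e1 (c k'))]
      exact (cdiag_sum Finset.univ (fun k' i => dd (c k') i ^ α)).symm
    have hgpos : ∀ i, (0:ℝ) < ∑ k', dd (c k') i ^ α := fun i =>
      Finset.sum_pos (fun k' _ => Real.rpow_pos_of_pos (hdpos _ i) α)
        ⟨k, Finset.mem_univ k⟩
    have e3 : (∑ k', mrpow (ρ (c k')) α)⁻¹
        = cdiag U0 (fun i => (∑ k', dd (c k') i ^ α)⁻¹) := by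
      rw [e2, cdiag_inv h1 h2 _ (fun i => (hgpos i).ne')]
    have e4 : mrpow (ρ (c k)) α * (∑ k', mrpow (ρ (c k')) α)⁻¹
        = cdiag U0 (fun i => dd (c k) i ^ α * (∑ k', dd (c k') i ^ α)⁻¹) := by
      rw [e1 (c k), e3, cdiag_mul h1]
    have e5 : (1 : Matrix m m ℂ) - mrpow (ρ (c k)) α * (∑ k', mrpow (ρ (c k')) α)⁻¹
        = cdiag U0 (fun i => 1 - dd (c k) i ^ α * (∑ k', dd (c k') i ^ α)⁻¹) := by
      rw [e4]
      have := cdiag_sub (U := U0) (fun _ => (1:ℝ))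
        (fun i => dd (c k) i ^ α * (∑ k', dd (c k') i ^ α)⁻¹)
      rw [cdiag_one h2] at this
      exact this.symm
    have e6 : (ρ (c k)) * ((1 : Matrix m m ℂ) -
        mrpow (ρ (c k)) α * (∑ k', mrpow (ρ (c k')) α)⁻¹)
        = cdiag U0 (fun i => dd (c k) i *
            (1 - dd (c k) i ^ α * (∑ k', dd (c k') i ^ α)⁻¹)) := by
      rw [e5, hddc (c k), cdiag_mul h1]
    rw [e6, cdiag_trace_re h1]
  -- trace identity for the right-hand side
  have eR : (∑ x, P x • mrpow (ρ x) α)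
      = cdiag U0 (fun i => ∑ x, P x * dd x i ^ α) := by
    rw [cdiag_sum Finset.univ (fun x i => P x * dd x i ^ α)]
    refine Finset.sum_congr rfl fun x _ => ?_
    rw [e1 x]
    exact (cdiag_smul (P x) _).symm
  have eR2 : (mrpow (∑ x, P x • mrpow (ρ x) α) (1 + (1 - α) / α)).trace.re
      = ∑ i, (∑ x, P x * dd x i ^ α) ^ (1 + (1 - α) / α) := by
    rw [eR, cdiag_mrpow h1 h2, cdiag_trace_re h1]
  have hLHS : ∑ c : Fin M → X, (∏ k, P (c k)) *
        ((1 / (M : ℝ)) * ∑ k, ((ρ (c k)) *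
          ((1 : Matrix m m ℂ) -
            mrpow (ρ (c k)) α * (∑ k', mrpow (ρ (c k')) α)⁻¹)).trace.re)
      = ∑ c : Fin M → X, (∏ k, P (c k)) * ((1 / (M:ℝ)) * ∑ k, ∑ i, dd (c k) i *
          (1 - dd (c k) i ^ α * (∑ k', dd (c k') i ^ α)⁻¹)) := by
    refine Finset.sum_congr rfl fun c _ => ?_
    rw [Finset.sum_congr rfl (fun k _ => hTr c k)]
  rw [hLHS, eR2]
  exact scalar_main M hM P hP hP1 dd hdpos α hα1 hα2
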